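/- arXiv:math/0612185 — 4 statements merged into one kernel-verified Lean document; each statement's English description precedes it below -/
import Mathlib

section
/- Let A be a commutative ring, K a field, and α* : A → K[[t]] a ring homomorphism. Let 𝔞 ⊆ A be an ideal and m ∈ ℕ with ord_t(α*(a)) ≥ m for all a ∈ 𝔞. If x ∈ A is integral over 𝔞 (i.e., satisfies x^n + a₁x^{n-1} + ⋯ + aₙ = 0 with aᵢ ∈ 𝔞^i), then ord_t(α*(x)) ≥ m. -/
open PowerSeries

private lemma my_order_neg {K : Type*} [Field K] (f : PowerSeries K) :
    (-f).order = f.order := by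
  have h : ∀ g : PowerSeries K, g.order ≤ (-g).order := fun g =>
    PowerSeries.le_order _ _ fun i hi => by
      rw [map_neg, PowerSeries.coeff_of_lt_order i hi, neg_zero]
  refine le_antisymm ?_ (h f)
  simpa [neg_neg] using h (-f)

private lemma le_order_finset_sum {K : Type*} [Field K] {ι : Type*} (s : Finset ι)
    (f : ι → PowerSeries K) (c : ℕ∞) (h : ∀ i ∈ s, c ≤ (f i).order) :
    c ≤ (∑ i ∈ s, f i).order := by
  classical
  induction s using Finset.induction with
  | empty => simp [PowerSeries.order_zero]
  | insert _ _ hi ih =>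
    rename_i j s
    rw [Finset.sum_insert hi]
    refine le_trans ?_ (PowerSeries.min_order_le_order_add _ _)
    exact le_min (h j (by simp)) (ih fun i hi' => h i (by simp [hi']))

private lemma order_mem_pow {A : Type*} [CommRing A] {K : Type*} [Field K]
    (φ : A →+* PowerSeries K) (𝔞 : Ideal A) (m : ℕ)
    (hm : ∀ a ∈ 𝔞, (m : ℕ∞) ≤ (φ a).order) :
    ∀ i : ℕ, ∀ b ∈ 𝔞 ^ i, ((i * m : ℕ) : ℕ∞) ≤ (φ b).order := by
  intro i
  induction i with
  | zero => simp
  | succ i ih =>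
    intro b hb
    rw [pow_succ] at hb
    refine Submodule.mul_induction_on hb ?_ ?_
    · intro p hp q hq
      rw [map_mul, PowerSeries.order_mul]
      calc (((i + 1) * m : ℕ) : ℕ∞) = ((i * m : ℕ) : ℕ∞) + (m : ℕ∞) := by
            push_cast; ring
        _ ≤ (φ p).order + (φ q).order := add_le_add (ih p hp) (hm q hq)
    · intro p q hp hq
      rw [map_add]
      exact le_trans (le_min hp hq) (PowerSeries.min_order_le_order_add _ _)

/-- If `α* : A → K[[t]]` is a ring homomorphism, `𝔞 ⊆ A` an ideal with
`ord_t(α*(a)) ≥ m` for all `a ∈ 𝔞`, and `x` is integral over `𝔞`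
(i.e. `x^n + a₁x^{n-1} + ⋯ + aₙ = 0` with `aᵢ ∈ 𝔞^i`), then `ord_t(α*(x)) ≥ m`. -/
theorem order_ge_of_integral_over_ideal
    {A : Type*} [CommRing A] {K : Type*} [Field K]
    (φ : A →+* PowerSeries K) (𝔞 : Ideal A) (m : ℕ)
    (hm : ∀ a ∈ 𝔞, (m : ℕ∞) ≤ (φ a).order)
    (x : A) (n : ℕ) (hn : 1 ≤ n) (a : ℕ → A)
    (ha : ∀ i, 1 ≤ i → i ≤ n → a i ∈ 𝔞 ^ i)
    (heq : x ^ n + ∑ i ∈ Finset.Icc 1 n, a i * x ^ (n - i) = 0) :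
    (m : ℕ∞) ≤ (φ x).order := by
  by_cases hx : φ x = 0
  · simp [hx, PowerSeries.order_zero]
  by_contra hlt
  push_neg at hlt
  obtain ⟨d, hd⟩ : ∃ d : ℕ, (φ x).order = d := by
    lift (φ x).order to ℕ using (by
      simpa [PowerSeries.order_eq_top] using hx) with d
    exact ⟨d, rfl⟩
  rw [hd, Nat.cast_lt] at hlt
  have horder_pow : ∀ k : ℕ, ((φ x) ^ k).order = ((k * d : ℕ) : ℕ∞) := by
    intro k
    induction k with
    | zero => simp [PowerSeries.order_one]
    | succ k ih =>
      rw [pow_succ, PowerSeries.order_mul, ih, hd]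
      push_cast; ring
  have key : (((n * d + 1 : ℕ)) : ℕ∞) ≤ ((φ x) ^ n).order := by
    have : (φ x) ^ n = - ∑ i ∈ Finset.Icc 1 n, φ (a i) * (φ x) ^ (n - i) := by
      have := congrArg φ heq
      simp only [map_add, map_pow, map_sum, map_mul, map_zero] at this
      exact eq_neg_of_add_eq_zero_left this
    rw [this, my_order_neg]
    apply le_order_finset_sum
    intro i hi
    rw [Finset.mem_Icc] at hi
    rw [PowerSeries.order_mul, horder_pow]
    calc ((n * d + 1 : ℕ) : ℕ∞) ≤ ((i * m + (n - i) * d : ℕ) : ℕ∞) := by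
          rw [Nat.cast_le]
          have h1 : i * d + i ≤ i * m := by
            calc i * d + i = i * (d + 1) := by ring
              _ ≤ i * m := Nat.mul_le_mul_left i hlt
          have h2 : (n - i) * d + i * d = n * d := by
            rw [← Nat.add_mul, Nat.sub_add_cancel hi.2]
          omega
      _ = ((i * m : ℕ) : ℕ∞) + (((n - i) * d : ℕ) : ℕ∞) := by push_cast; ring
      _ ≤ (φ (a i)).order + (((n - i) * d : ℕ) : ℕ∞) :=
          add_le_add (order_mem_pow φ 𝔞 m hm i (a i) (ha i hi.1 hi.2)) le_rfl
  rw [horder_pow, Nat.cast_le] at key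
  omega
end

section
/- Let R = ℂ[a₂, a₃, a₄, …, b₃, b₄, b₅, …] be a polynomial ring in countably many variables, localized at a₂ and b₃, and let I be the ideal generated by a₂³ − b₃² and 3a₂²a₃ − 2b₃b₄. Let K be the fraction field of R/I (which is a domain). Define α*(x) = Σ_{i≥2} aᵢtⁱ and α*(y) = Σ_{j≥3} bⱼtʲ in K[[t]]. Then the coefficient c₈ = 3a₂a₃² + 3a₂²a₄ − b₄² − 2b₃b₅ of t⁸ in α*(x³ − y²) is transcendental over the subfield ℂ(a₂, a₃, b₃, b₄) of K. -/
open MvPolynomial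

/-- The index type of the arc-space variables `a₂, a₃, …` and `b₃, b₄, …`. -/
abbrev ArcVar : Type := {i : ℕ // 2 ≤ i} ⊕ {j : ℕ // 3 ≤ j}

/-- The arc variable `aᵢ` (for `i ≥ 2`). -/
noncomputable def arcA (i : {i : ℕ // 2 ≤ i}) : MvPolynomial ArcVar ℂ := X (Sum.inl i)

/-- The arc variable `bⱼ` (for `j ≥ 3`). -/
noncomputable def arcB (j : {j : ℕ // 3 ≤ j}) : MvPolynomial ArcVar ℂ := X (Sum.inr j)

/-- `ℂ[a₂, a₃, …, b₃, b₄, …]` with `a₂` and `b₃` inverted. -/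
noncomputable abbrev ArcLoc : Type :=
  Localization.Away (arcA ⟨2, le_refl 2⟩ * arcB ⟨3, le_refl 3⟩)

/-- The ideal `I = (a₂³ − b₃², 3a₂²a₃ − 2b₃b₄)` of `ArcLoc`. -/
noncomputable def arcIdeal : Ideal ArcLoc :=
  Ideal.span
    { algebraMap (MvPolynomial ArcVar ℂ) ArcLoc
        ((arcA ⟨2, le_refl 2⟩) ^ 3 - (arcB ⟨3, le_refl 3⟩) ^ 2),
      algebraMap (MvPolynomial ArcVar ℂ) ArcLoc
        (3 * (arcA ⟨2, le_refl 2⟩) ^ 2 * arcA ⟨3, Nat.le_succ 2⟩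
          - 2 * arcB ⟨3, le_refl 3⟩ * arcB ⟨4, Nat.le_succ 3⟩) }

namespace C8aux

noncomputable def pa2 : MvPolynomial ArcVar ℂ := arcA ⟨2, le_refl 2⟩
noncomputable def pa3 : MvPolynomial ArcVar ℂ := arcA ⟨3, Nat.le_succ 2⟩
noncomputable def pa4 : MvPolynomial ArcVar ℂ := arcA ⟨4, by norm_num⟩
noncomputable def pb3 : MvPolynomial ArcVar ℂ := arcB ⟨3, le_refl 3⟩
noncomputable def pb4 : MvPolynomial ArcVar ℂ := arcB ⟨4, Nat.le_succ 3⟩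
noncomputable def pb5 : MvPolynomial ArcVar ℂ := arcB ⟨5, by norm_num⟩

/-- the distinguished variable `a₄`. -/
def v4 : ArcVar := Sum.inl ⟨4, by norm_num⟩

noncomputable def g1 : MvPolynomial ArcVar ℂ := pa2 ^ 3 - pb3 ^ 2
noncomputable def g2 : MvPolynomial ArcVar ℂ := 3 * pa2 ^ 2 * pa3 - 2 * pb3 * pb4
noncomputable def c8p : MvPolynomial ArcVar ℂ :=
  3 * pa2 * pa3 ^ 2 + 3 * pa2 ^ 2 * pa4 - pb4 ^ 2 - 2 * pb3 * pb5

open scoped Classical in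
/-- substitution `a₄ ↦ a₄ + c`, fixing all other variables -/
noncomputable def tau (c : ℂ) : MvPolynomial ArcVar ℂ →ₐ[ℂ] MvPolynomial ArcVar ℂ :=
  aeval (fun v => if v = v4 then X v4 + MvPolynomial.C c else X v)

lemma tau_X_ne (c : ℂ) {v : ArcVar} (h : v ≠ v4) : tau c (X v) = X v := by
  simp [tau, h]

lemma tau_a4 (c : ℂ) : tau c pa4 = pa4 + MvPolynomial.C c := by
  have : pa4 = X v4 := rfl
  simp [this, tau]

lemma tau_C (c z : ℂ) : tau c (MvPolynomial.C z) = MvPolynomial.C z := by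
  simp [tau]

lemma tau_a2 (c : ℂ) : tau c pa2 = pa2 := tau_X_ne c (by simp [v4, Subtype.ext_iff])
lemma tau_a3 (c : ℂ) : tau c pa3 = pa3 := tau_X_ne c (by simp [v4, Subtype.ext_iff])
lemma tau_b3 (c : ℂ) : tau c pb3 = pb3 := tau_X_ne c (by simp [v4])
lemma tau_b4 (c : ℂ) : tau c pb4 = pb4 := tau_X_ne c (by simp [v4])
lemma tau_b5 (c : ℂ) : tau c pb5 = pb5 := tau_X_ne c (by simp [v4])

lemma tau_tau (c c' : ℂ) (hcc : c + c' = 0) (p : MvPolynomial ArcVar ℂ) :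
    tau c (tau c' p) = p := by
  have : (tau c).comp (tau c') = AlgHom.id ℂ _ := by
    apply MvPolynomial.algHom_ext
    intro v
    by_cases h : v = v4
    · subst h
      simp only [AlgHom.comp_apply, AlgHom.id_apply]
      have h1 : tau c' (X v4) = X v4 + MvPolynomial.C c' := by simp [tau]
      have h2 : tau c (X v4) = X v4 + MvPolynomial.C c := by simp [tau]
      rw [h1, map_add, h2, tau_C, add_assoc, ← map_add, hcc, map_zero, add_zero]
    · simp [AlgHom.comp_apply, tau_X_ne _ h]
  calc tau c (tau c' p) = ((tau c).comp (tau c')) p := rfl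
    _ = p := by rw [this]; rfl

lemma tau_g1 (c : ℂ) : tau c g1 = g1 := by
  simp [g1, map_sub, map_pow, tau_a2, tau_b3]

lemma tau_g2 (c : ℂ) : tau c g2 = g2 := by
  simp only [g2, map_sub, map_mul, map_pow, map_ofNat, tau_a2, tau_a3, tau_b3, tau_b4]

lemma tau_c8p (c : ℂ) : tau c c8p = c8p + 3 * pa2 ^ 2 * MvPolynomial.C c := by
  simp only [c8p, map_sub, map_add, map_mul, map_pow, map_ofNat,
    tau_a2, tau_a3, tau_a4, tau_b3, tau_b4, tau_b5]
  ring

lemma tau_a2b3 (c : ℂ) : tau c (pa2 * pb3) = pa2 * pb3 := by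
  rw [map_mul, tau_a2, tau_b3]

lemma hu_tau (c : ℂ) :
    IsUnit (((algebraMap (MvPolynomial ArcVar ℂ) ArcLoc).comp (tau c).toRingHom)
      (arcA ⟨2, le_refl 2⟩ * arcB ⟨3, le_refl 3⟩)) := by
  show IsUnit (((algebraMap (MvPolynomial ArcVar ℂ) ArcLoc).comp
    (tau c).toRingHom) (pa2 * pb3))
  rw [RingHom.comp_apply,
    show (tau c).toRingHom (pa2 * pb3) = pa2 * pb3 from tau_a2b3 c]
  exact IsLocalization.Away.algebraMap_isUnit (arcA ⟨2, le_refl 2⟩ * arcB ⟨3, le_refl 3⟩)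

noncomputable def Tc (c : ℂ) : ArcLoc →+* ArcLoc :=
  Localization.awayLift ((algebraMap (MvPolynomial ArcVar ℂ) ArcLoc).comp (tau c).toRingHom)
    (arcA ⟨2, le_refl 2⟩ * arcB ⟨3, le_refl 3⟩)
    (hu_tau c)

lemma Tc_algebraMap (c : ℂ) (p : MvPolynomial ArcVar ℂ) :
    Tc c (algebraMap (MvPolynomial ArcVar ℂ) ArcLoc p)
      = algebraMap (MvPolynomial ArcVar ℂ) ArcLoc (tau c p) :=
  IsLocalization.Away.lift_eq _ (hu_tau c) p

lemma arcIdeal_tau (c : ℂ) {p : MvPolynomial ArcVar ℂ}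
    (h : algebraMap (MvPolynomial ArcVar ℂ) ArcLoc p ∈ arcIdeal) :
    algebraMap (MvPolynomial ArcVar ℂ) ArcLoc (tau c p) ∈ arcIdeal := by
  have hle : arcIdeal.map (Tc c) ≤ arcIdeal := by
    rw [arcIdeal, Ideal.map_span]
    refine Ideal.span_le.mpr ?_
    rintro x ⟨y, hy, rfl⟩
    simp only [Set.mem_insert_iff, Set.mem_singleton_iff] at hy
    rcases hy with rfl | rfl
    · rw [show algebraMap (MvPolynomial ArcVar ℂ) ArcLoc
          ((arcA ⟨2, le_refl 2⟩) ^ 3 - (arcB ⟨3, le_refl 3⟩) ^ 2)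
          = algebraMap (MvPolynomial ArcVar ℂ) ArcLoc g1 from rfl,
        Tc_algebraMap, tau_g1]
      exact Ideal.subset_span (Set.mem_insert _ _)
    · rw [show algebraMap (MvPolynomial ArcVar ℂ) ArcLoc
          (3 * (arcA ⟨2, le_refl 2⟩) ^ 2 * arcA ⟨3, Nat.le_succ 2⟩
            - 2 * arcB ⟨3, le_refl 3⟩ * arcB ⟨4, Nat.le_succ 3⟩)
          = algebraMap (MvPolynomial ArcVar ℂ) ArcLoc g2 from rfl,
        Tc_algebraMap, tau_g2]
      exact Ideal.subset_span (Set.mem_insert_iff.mpr (Or.inr rfl))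
  have h2 := Ideal.mem_map_of_mem (Tc c) h
  rw [Tc_algebraMap] at h2
  exact hle h2

open scoped Classical in
noncomputable def ev0 : MvPolynomial ArcVar ℂ →ₐ[ℂ] ℂ :=
  aeval (fun v =>
    if v = Sum.inl (⟨2, le_refl 2⟩ : {i : ℕ // 2 ≤ i})
        ∨ v = Sum.inr (⟨3, le_refl 3⟩ : {j : ℕ // 3 ≤ j}) then (1 : ℂ) else 0)

lemma ev0_a2 : ev0 pa2 = 1 := by simp [ev0, pa2, arcA]
lemma ev0_b3 : ev0 pb3 = 1 := by simp [ev0, pb3, arcB]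
lemma ev0_a3 : ev0 pa3 = 0 := by simp [ev0, pa3, arcA, Subtype.ext_iff]
lemma ev0_b4 : ev0 pb4 = 0 := by simp [ev0, pb4, arcB, Subtype.ext_iff]

lemma hu_ev0 :
    IsUnit (ev0.toRingHom (arcA ⟨2, le_refl 2⟩ * arcB ⟨3, le_refl 3⟩)) := by
  show IsUnit (ev0.toRingHom (pa2 * pb3))
  have h : ev0.toRingHom (pa2 * pb3) = 1 := by
    rw [show ev0.toRingHom (pa2 * pb3) = ev0 (pa2 * pb3) from rfl, map_mul, ev0_a2, ev0_b3,
      one_mul]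
  rw [h]; exact isUnit_one

noncomputable def evL : ArcLoc →+* ℂ :=
  Localization.awayLift ev0.toRingHom (arcA ⟨2, le_refl 2⟩ * arcB ⟨3, le_refl 3⟩)
    hu_ev0

lemma evL_algebraMap (p : MvPolynomial ArcVar ℂ) :
    evL (algebraMap (MvPolynomial ArcVar ℂ) ArcLoc p) = ev0 p :=
  IsLocalization.Away.lift_eq _ hu_ev0 p

lemma a2_not_mem : algebraMap (MvPolynomial ArcVar ℂ) ArcLoc pa2 ∉ arcIdeal := by
  intro h
  have hle : arcIdeal ≤ RingHom.ker evL := by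
    rw [arcIdeal]
    refine Ideal.span_le.mpr ?_
    rintro x hx
    simp only [Set.mem_insert_iff, Set.mem_singleton_iff] at hx
    rcases hx with rfl | rfl
    · rw [SetLike.mem_coe, RingHom.mem_ker,
        show ((arcA ⟨2, le_refl 2⟩) ^ 3 - (arcB ⟨3, le_refl 3⟩) ^ 2) = g1 from rfl,
        evL_algebraMap]
      simp [g1, map_sub, map_pow, ev0_a2, ev0_b3]
    · rw [SetLike.mem_coe, RingHom.mem_ker,
        show (3 * (arcA ⟨2, le_refl 2⟩) ^ 2 * arcA ⟨3, Nat.le_succ 2⟩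
          - 2 * arcB ⟨3, le_refl 3⟩ * arcB ⟨4, Nat.le_succ 3⟩) = g2 from rfl,
        evL_algebraMap]
      simp [g2, map_sub, map_mul, map_pow, map_ofNat, ev0_a2, ev0_a3, ev0_b3, ev0_b4]
  have h1 := hle h
  rw [RingHom.mem_ker, evL_algebraMap, ev0_a2] at h1
  exact one_ne_zero h1

noncomputable def taue (c : ℂ) : MvPolynomial ArcVar ℂ ≃+* MvPolynomial ArcVar ℂ :=
  RingEquiv.ofRingHom (tau c).toRingHom (tau (-c)).toRingHom
    (RingHom.ext fun p => tau_tau c (-c) (by ring) p)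
    (RingHom.ext fun p => tau_tau (-c) c (by ring) p)

lemma taue_apply (c : ℂ) (p : MvPolynomial ArcVar ℂ) : taue c p = tau c p := rfl

end C8aux

/-- Let `K` be the fraction field of `ArcLoc/I` (a domain), presented by a ring
homomorphism `π : ℂ[a₂, a₃, …, b₃, b₄, …] → K` whose kernel is the contraction of
`I` and whose image generates `K` as a field of fractions.  Then the coefficient
`c₈ = 3a₂a₃² + 3a₂²a₄ − b₄² − 2b₃b₅` of `t⁸` in `α*(x³ − y²)` is transcendental
over the subfield `ℂ(a₂, a₃, b₃, b₄)` of `K`. -/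
theorem c8_transcendental
    {K : Type*} [Field K] (π : MvPolynomial ArcVar ℂ →+* K)
    (hker : ∀ p : MvPolynomial ArcVar ℂ,
      π p = 0 ↔ algebraMap (MvPolynomial ArcVar ℂ) ArcLoc p ∈ arcIdeal)
    (hfrac : ∀ x : K, ∃ p q : MvPolynomial ArcVar ℂ, π q ≠ 0 ∧ x = π p / π q) :
    Transcendental
      (Subfield.closure
        (Set.range (fun z : ℂ => π (C z)) ∪
          { π (arcA ⟨2, le_refl 2⟩), π (arcA ⟨3, Nat.le_succ 2⟩),
            π (arcB ⟨3, le_refl 3⟩), π (arcB ⟨4, Nat.le_succ 3⟩) }))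
      (π (3 * arcA ⟨2, le_refl 2⟩ * (arcA ⟨3, Nat.le_succ 2⟩) ^ 2
        + 3 * (arcA ⟨2, le_refl 2⟩) ^ 2 * arcA ⟨4, by norm_num⟩
        - (arcB ⟨4, Nat.le_succ 3⟩) ^ 2
        - 2 * arcB ⟨3, le_refl 3⟩ * arcB ⟨5, by norm_num⟩)) := by
  classical
  set S : Set K :=
    (Set.range (fun z : ℂ => π (C z)) ∪
      { π (arcA ⟨2, le_refl 2⟩), π (arcA ⟨3, Nat.le_succ 2⟩),
        π (arcB ⟨3, le_refl 3⟩), π (arcB ⟨4, Nat.le_succ 3⟩) }) with hS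
  intro halg
  -- basic nonvanishing facts
  have hπC : Function.Injective (fun z : ℂ => π (MvPolynomial.C z)) := by
    intro z1 z2 h
    exact RingHom.injective (π.comp (MvPolynomial.C : ℂ →+* MvPolynomial ArcVar ℂ)) h
  have ha2 : π C8aux.pa2 ≠ 0 := fun h => C8aux.a2_not_mem ((hker _).mp h)
  have h3K : (3 : K) ≠ 0 := by
    have e : (3 : K) = π (MvPolynomial.C (3 : ℂ)) := by rw [map_ofNat, map_ofNat]
    rw [e]
    intro h0
    have h1 : (fun z : ℂ => π (MvPolynomial.C z)) 3 = (fun z : ℂ => π (MvPolynomial.C z)) 0 := by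
      simp only [map_zero, h0]
    exact (by norm_num : (3 : ℂ) ≠ 0) (hπC h1)
  have h3a2 : π (3 * C8aux.pa2 ^ 2) ≠ 0 := by
    rw [map_mul, map_pow, map_ofNat]
    exact mul_ne_zero h3K (pow_ne_zero 2 ha2)
  -- kernel invariance under tau
  have hker_mem : ∀ (c : ℂ) (p : MvPolynomial ArcVar ℂ),
      p ∈ RingHom.ker π → C8aux.tau c p ∈ RingHom.ker π := by
    intro c p hp
    rw [RingHom.mem_ker] at hp ⊢
    exact (hker _).mpr (C8aux.arcIdeal_tau c ((hker p).mp hp))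
  set J := RingHom.ker π with hJ
  have hJmap : ∀ c : ℂ,
      J.map ((C8aux.taue c : MvPolynomial ArcVar ℂ ≃+* MvPolynomial ArcVar ℂ) :
        MvPolynomial ArcVar ℂ →+* MvPolynomial ArcVar ℂ) = J := by
    intro c
    apply le_antisymm
    · rw [Ideal.map_le_iff_le_comap]
      intro p hp
      exact hker_mem c p hp
    · intro p hp
      have h1 : C8aux.tau (-c) p ∈ J := hker_mem (-c) p hp
      have h2 := Ideal.mem_map_of_mem
        ((C8aux.taue c : MvPolynomial ArcVar ℂ ≃+* MvPolynomial ArcVar ℂ) :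
          MvPolynomial ArcVar ℂ →+* MvPolynomial ArcVar ℂ) h1
      rwa [show ((C8aux.taue c : MvPolynomial ArcVar ℂ ≃+* MvPolynomial ArcVar ℂ) :
          MvPolynomial ArcVar ℂ →+* MvPolynomial ArcVar ℂ) (C8aux.tau (-c) p) = p from
        C8aux.tau_tau c (-c) (by ring) p] at h2
  -- fraction-field structure on K over the quotient
  letI : Algebra (MvPolynomial ArcVar ℂ ⧸ J) K := (RingHom.kerLift π).toAlgebra
  have halgmap : ∀ p : MvPolynomial ArcVar ℂ,
      algebraMap (MvPolynomial ArcVar ℂ ⧸ J) K (Ideal.Quotient.mk J p) = π p :=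
    fun p => RingHom.kerLift_mk π p
  have hinj : Function.Injective (algebraMap (MvPolynomial ArcVar ℂ ⧸ J) K) :=
    RingHom.kerLift_injective π
  haveI : Nontrivial (MvPolynomial ArcVar ℂ ⧸ J) := by
    refine ⟨⟨1, 0, fun h => ?_⟩⟩
    have h2 := congrArg (algebraMap (MvPolynomial ArcVar ℂ ⧸ J) K) h
    rw [map_one, map_zero] at h2
    exact one_ne_zero h2
  haveI : IsFractionRing (MvPolynomial ArcVar ℂ ⧸ J) K :=
    { map_units := fun y => by
        have hy : (y : MvPolynomial ArcVar ℂ ⧸ J) ≠ 0 := nonZeroDivisors.ne_zero y.2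
        exact isUnit_iff_ne_zero.mpr fun h => hy (hinj (by rw [h, map_zero]))
      surj := fun z => by
        obtain ⟨p, q, hq, rfl⟩ := hfrac z
        have hmq : Ideal.Quotient.mk J q ∈ nonZeroDivisors (MvPolynomial ArcVar ℂ ⧸ J) := by
          rw [mem_nonZeroDivisors_iff_right]
          intro x hx
          have h2 := congrArg (algebraMap (MvPolynomial ArcVar ℂ ⧸ J) K) hx
          rw [map_mul, map_zero, halgmap] at h2
          rcases mul_eq_zero.mp h2 with h | h
          · exact hinj (by rw [h, map_zero])
          · exact absurd h hq
        refine ⟨⟨Ideal.Quotient.mk J p, ⟨Ideal.Quotient.mk J q, hmq⟩⟩, ?_⟩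
        rw [halgmap, halgmap]
        exact div_mul_cancel₀ _ hq
      exists_of_eq := fun {x y} h => ⟨1, by rw [hinj h]⟩ }
  -- the automorphisms of K
  set σ : ℂ → (K ≃+* K) := fun c =>
    IsFractionRing.ringEquivOfRingEquiv (Ideal.quotientEquiv J J (C8aux.taue c) (hJmap c).symm)
    with hσ
  have hσπ : ∀ (c : ℂ) (p : MvPolynomial ArcVar ℂ), σ c (π p) = π (C8aux.tau c p) := by
    intro c p
    rw [hσ, ← halgmap p, IsFractionRing.ringEquivOfRingEquiv_algebraMap]
    have h1 : Ideal.quotientEquiv J J (C8aux.taue c) (hJmap c).symm (Ideal.Quotient.mk J p)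
        = Ideal.Quotient.mk J (C8aux.tau c p) := by
      simp only [Ideal.quotientEquiv_apply, Ideal.quotientMap_mk]
      rfl
    rw [h1, halgmap]
  -- σ c fixes the base subfield pointwise
  have hfixS : ∀ (c : ℂ), ∀ x ∈ S, σ c x = x := by
    intro c x hx
    rw [hS] at hx
    rcases hx with ⟨z, rfl⟩ | hx
    · show σ c (π (MvPolynomial.C z)) = π (MvPolynomial.C z)
      rw [hσπ, C8aux.tau_C]
    · simp only [Set.mem_insert_iff, Set.mem_singleton_iff] at hx
      rcases hx with rfl | rfl | rfl | rfl
      · show σ c (π C8aux.pa2) = π C8aux.pa2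
        rw [hσπ, C8aux.tau_a2]
      · show σ c (π C8aux.pa3) = π C8aux.pa3
        rw [hσπ, C8aux.tau_a3]
      · show σ c (π C8aux.pb3) = π C8aux.pb3
        rw [hσπ, C8aux.tau_b3]
      · show σ c (π C8aux.pb4) = π C8aux.pb4
        rw [hσπ, C8aux.tau_b4]
  have hfixF : ∀ c : ℂ, ∀ x ∈ Subfield.closure S, σ c x = x := by
    intro c x hx
    refine Subfield.closure_induction (fun y hy => hfixS c y hy) (map_one _)
      (fun y z _ _ hy hz => ?_) (fun y _ hy => ?_) (fun y _ hy => ?_)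
      (fun y z _ _ hy hz => ?_) hx
    · rw [map_add, hy, hz]
    · rw [map_neg, hy]
    · rw [map_inv₀, hy]
    · rw [map_mul, hy, hz]
  -- extract the polynomial witnessing algebraicity
  obtain ⟨P, hP0, hPev⟩ := halg
  have hFinj : Function.Injective (algebraMap (Subfield.closure S) K) :=
    fun x y h => Subtype.ext h
  set Q : Polynomial K := P.map (algebraMap (Subfield.closure S) K) with hQ
  have hQ0 : Q ≠ 0 := fun h =>
    hP0 (Polynomial.map_injective _ hFinj (by rw [← hQ, h, Polynomial.map_zero]))
  have hx0 : π (3 * arcA ⟨2, le_refl 2⟩ * (arcA ⟨3, Nat.le_succ 2⟩) ^ 2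
        + 3 * (arcA ⟨2, le_refl 2⟩) ^ 2 * arcA ⟨4, by norm_num⟩
        - (arcB ⟨4, Nat.le_succ 3⟩) ^ 2
        - 2 * arcB ⟨3, le_refl 3⟩ * arcB ⟨5, by norm_num⟩) = π C8aux.c8p := rfl
  rw [hx0] at hPev
  have hQc8 : Q.eval (π C8aux.c8p) = 0 := by
    rw [hQ, Polynomial.eval_map, ← Polynomial.aeval_def, hPev]
  -- each σ c gives a new root of Q
  have hroot : ∀ c : ℂ,
      Q.IsRoot (π C8aux.c8p + π (3 * C8aux.pa2 ^ 2) * π (MvPolynomial.C c)) := by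
    intro c
    have hσc8 : σ c (π C8aux.c8p)
        = π C8aux.c8p + π (3 * C8aux.pa2 ^ 2) * π (MvPolynomial.C c) := by
      rw [hσπ, C8aux.tau_c8p, map_add, map_mul]
    have hQmap : Q.map ((σ c : K ≃+* K) : K →+* K) = Q := by
      ext n
      rw [Polynomial.coeff_map, hQ, Polynomial.coeff_map]
      exact hfixF c _ (SetLike.coe_mem (P.coeff n))
    have hcomm : σ c (Q.eval (π C8aux.c8p)) = Q.eval (σ c (π C8aux.c8p)) := by
      have h := Polynomial.eval₂_at_apply (p := Q) ((σ c : K ≃+* K) : K →+* K) (π C8aux.c8p)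
      rw [← Polynomial.eval_map, hQmap] at h
      exact h.symm
    show Q.eval _ = 0
    rw [← hσc8, ← hcomm, hQc8, map_zero]
  have hinjroots : Function.Injective
      (fun c : ℂ => π C8aux.c8p + π (3 * C8aux.pa2 ^ 2) * π (MvPolynomial.C c)) := by
    intro c1 c2 h
    simp only [add_right_inj] at h
    exact hπC (mul_left_cancel₀ h3a2 h)
  exact (Polynomial.finite_setOf_isRoot hQ0).not_infinite
    (Set.infinite_of_injective_forall_mem hinjroots hroot)
end

section
/- The ring ℂ[a₂^{±1}, a₃, …, b₃^{±1}, b₄, …]/(a₂³ − b₃², 3a₂²a₃ − 2b₃b₄) is an integral domain. Equivalently, the ideal (a₂³ − b₃², 3a₂²a₃ − 2b₃b₄) is prime in the localization of the polynomial ring ℂ[a₂, a₃, a₄, …, b₃, b₄, …] at the multiplicative set generated by a₂ and b₃. -/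
set_option maxHeartbeats 1600000
set_option synthInstance.maxHeartbeats 400000

open MvPolynomial

namespace ArcCusp

noncomputable section

abbrev R : Type := MvPolynomial ArcVar ℂ
abbrev S : Type := Localization.Away (arcA ⟨2, le_refl 2⟩ * arcB ⟨3, le_refl 3⟩)

abbrev a2 : R := arcA ⟨2, le_refl 2⟩
abbrev a3 : R := arcA ⟨3, by decide⟩
abbrev b3 : R := arcB ⟨3, le_refl 3⟩
abbrev b4 : R := arcB ⟨4, by decide⟩

abbrev f1 : R := a2 ^ 3 - b3 ^ 2
abbrev f2 : R := 3 * a2 ^ 2 * a3 - 2 * b3 * b4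

def I : Ideal S := Ideal.span {algebraMap R S f1, algebraMap R S f2}

abbrev Q : Type := S ⧸ I

lemma hwu : IsUnit (algebraMap R S (a2 * b3)) :=
  IsLocalization.Away.algebraMap_isUnit (S := S) _

lemma hau : IsUnit (algebraMap R S a2) :=
  isUnit_of_mul_isUnit_left (x := algebraMap R S a2) (by rw [← map_mul]; exact hwu)

lemma hbu : IsUnit (algebraMap R S b3) :=
  isUnit_of_mul_isUnit_right (y := algebraMap R S b3) (by rw [← map_mul]; exact hwu)

def ua : Sˣ := hau.unit
def ub : Sˣ := hbu.unit

lemma ua_val : (ua : S) = algebraMap R S a2 := hau.unit_spec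
lemma ub_val : (ub : S) = algebraMap R S b3 := hbu.unit_spec

/-- variables of the target ring: `t`, `a₃, a₄, …`, `b₅, b₆, …`. -/
abbrev TVar : Type := Unit ⊕ ({i : ℕ // 3 ≤ i} ⊕ {j : ℕ // 5 ≤ j})
abbrev P : Type := MvPolynomial TVar ℂ
abbrev tP : P := X (Sum.inl ())
abbrev D : Type := Localization.Away tP
abbrev tD : D := algebraMap P D tP

def v : ArcVar → D
  | Sum.inl i =>
      if h : i.1 = 2 then tD ^ 2
      else algebraMap P D (X (Sum.inr (Sum.inl ⟨i.1, by have := i.2; omega⟩)))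
  | Sum.inr j =>
      if h : j.1 = 3 then tD ^ 3
      else if h4 : j.1 = 4 then
        algebraMap ℂ D (3/2) * tD * algebraMap P D (X (Sum.inr (Sum.inl ⟨3, le_refl 3⟩)))
      else algebraMap P D (X (Sum.inr (Sum.inr ⟨j.1, by have := j.2; omega⟩)))

lemma v_a2 (hn : 2 ≤ 2) : v (Sum.inl ⟨2, hn⟩) = tD ^ 2 := by simp [v]

lemma v_a {n : ℕ} (hn : 2 ≤ n) (h2 : ¬ n = 2) (hn' : 3 ≤ n) :
    v (Sum.inl ⟨n, hn⟩) = algebraMap P D (X (Sum.inr (Sum.inl ⟨n, hn'⟩))) := by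
  simp [v, h2]

lemma v_b3 (hn : 3 ≤ 3) : v (Sum.inr ⟨3, hn⟩) = tD ^ 3 := by simp [v]

lemma v_b4 (hn : 3 ≤ 4) : v (Sum.inr ⟨4, hn⟩) =
    algebraMap ℂ D (3/2) * tD *
      algebraMap P D (X (Sum.inr (Sum.inl ⟨3, le_refl 3⟩))) := by simp [v]

lemma v_b {n : ℕ} (hn : 3 ≤ n) (h3 : ¬ n = 3) (h4 : ¬ n = 4) (hn' : 5 ≤ n) :
    v (Sum.inr ⟨n, hn⟩) = algebraMap P D (X (Sum.inr (Sum.inr ⟨n, hn'⟩))) := by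
  simp [v, h3, h4]

def φ₀ : R →ₐ[ℂ] D := aeval v

lemma htD : IsUnit tD := IsLocalization.Away.algebraMap_isUnit (S := D) _

lemma phi0_units : ∀ y : Submonoid.powers (a2 * b3), IsUnit (φ₀ y) := by
  rintro ⟨y, n, rfl⟩
  rw [map_pow]
  refine IsUnit.pow n ?_
  have : φ₀ (a2 * b3) = tD ^ 2 * tD ^ 3 := by
    simp [φ₀, arcA, arcB, v]
  rw [this]
  exact ((htD.pow 2).mul (htD.pow 3))

def φS : S →ₐ[ℂ] D := IsLocalization.liftAlgHom (M := Submonoid.powers (a2 * b3)) phi0_units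

lemma φS_alg (r : R) : φS (algebraMap R S r) = φ₀ r := by
  simp [φS, IsLocalization.liftAlgHom_apply, IsLocalization.lift_eq]

lemma phi0_f1 : φ₀ f1 = 0 := by
  simp [φ₀, arcA, arcB, v]
  ring

lemma hcD : algebraMap ℂ D (3/2) * 2 = 3 := by
  rw [show (2 : D) = algebraMap ℂ D 2 from (map_ofNat _ 2).symm, ← map_mul,
    show (3/2 * 2 : ℂ) = 3 by norm_num, map_ofNat]

lemma phi0_f2 : φ₀ f2 = 0 := by
  simp [φ₀, arcA, arcB, v]
  linear_combination (-(tD ^ 4 * (algebraMap P D) (X (Sum.inr (Sum.inl (⟨3, le_refl 3⟩ : {i : ℕ // 3 ≤ i})))))) * hcD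

lemma φS_vanish : ∀ x ∈ I, φS x = 0 := by
  intro x hx
  have hle : I ≤ RingHom.ker φS.toRingHom := by
    rw [I, Ideal.span_le]
    rintro y (rfl | rfl)
    · show φS _ = 0
      rw [φS_alg, phi0_f1]
    · show φS _ = 0
      rw [φS_alg, phi0_f2]
  exact hle hx

def φQ : Q →ₐ[ℂ] D := Ideal.Quotient.liftₐ I φS φS_vanish

def π : S →ₐ[ℂ] Q := Ideal.Quotient.mkₐ ℂ I

lemma φQ_π (x : S) : φQ (π x) = φS x := by
  simp [φQ, π, Ideal.Quotient.liftₐ_apply, Ideal.Quotient.mkₐ_eq_mk]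
  exact Ideal.Quotient.lift_mk _ _ _

def u : TVar → Q
  | Sum.inl _ => π ((ub : S) * ((ua⁻¹ : Sˣ) : S))
  | Sum.inr (Sum.inl i) => π (algebraMap R S (arcA ⟨i.1, by have := i.2; omega⟩))
  | Sum.inr (Sum.inr j) => π (algebraMap R S (arcB ⟨j.1, by have := j.2; omega⟩))

def ψ₀ : P →ₐ[ℂ] Q := aeval u

lemma psi0_units : ∀ y : Submonoid.powers tP, IsUnit (ψ₀ y) := by
  rintro ⟨y, n, rfl⟩
  rw [map_pow]
  refine IsUnit.pow n ?_
  have : ψ₀ tP = π ((ub : S) * ((ua⁻¹ : Sˣ) : S)) := by simp [ψ₀, u]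
  rw [this]
  exact ((ub * ua⁻¹).isUnit).map π

def ψ : D →ₐ[ℂ] Q := IsLocalization.liftAlgHom (M := Submonoid.powers tP) psi0_units

lemma ψ_alg (p : P) : ψ (algebraMap P D p) = ψ₀ p := by
  simp [ψ, IsLocalization.liftAlgHom_apply, IsLocalization.lift_eq]

-- abbreviations in Q
abbrev A : Q := π (algebraMap R S a2)
abbrev A3 : Q := π (algebraMap R S a3)
abbrev B : Q := π (algebraMap R S b3)
abbrev B4 : Q := π (algebraMap R S b4)
abbrev A' : Q := π ((ua⁻¹ : Sˣ) : S)
abbrev B' : Q := π ((ub⁻¹ : Sˣ) : S)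

lemma hAA' : A * A' = 1 := by
  rw [← map_mul, ← ua_val, Units.mul_inv, map_one]

lemma hBB' : B * B' = 1 := by
  rw [← map_mul, ← ub_val, Units.mul_inv, map_one]

lemma hrel1 : A ^ 3 = B ^ 2 := by
  have h0 : π (algebraMap R S f1) = 0 :=
    Ideal.Quotient.eq_zero_iff_mem.mpr (Ideal.subset_span (Or.inl rfl))
  simp only [map_sub, map_pow, sub_eq_zero] at h0
  exact h0

lemma hrel2 : 3 * A ^ 2 * A3 = 2 * B * B4 := by
  have h0 : π (algebraMap R S f2) = 0 :=
    Ideal.Quotient.eq_zero_iff_mem.mpr (Ideal.subset_span (Or.inr rfl))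
  simp only [map_sub, map_mul, map_pow, map_ofNat, sub_eq_zero] at h0
  exact h0

lemma psi_tD : ψ tD = B * A' := by
  rw [ψ_alg]
  show ψ₀ (X (Sum.inl ())) = _
  simp [ψ₀, u, map_mul, ub_val]

lemma key : (ψ.comp φQ).comp π = π := by
  have h : ((ψ.comp φQ).comp π).toRingHom = π.toRingHom := by
    apply IsLocalization.ringHom_ext (Submonoid.powers (a2 * b3))
    apply MvPolynomial.ringHom_ext
    · intro r
      have hC : algebraMap R S (C r) = algebraMap ℂ S r := by
        rw [← MvPolynomial.algebraMap_eq, ← IsScalarTower.algebraMap_apply]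
      simp only [RingHom.coe_comp, Function.comp_apply, AlgHom.toRingHom_eq_coe,
        RingHom.coe_coe, AlgHom.coe_comp, hC, AlgHom.commutes]
    · intro i
      simp only [RingHom.coe_comp, Function.comp_apply, AlgHom.toRingHom_eq_coe,
        RingHom.coe_coe, AlgHom.coe_comp]
      rw [φQ_π, φS_alg]
      show ψ (aeval v (X i)) = π (algebraMap R S (X i))
      rw [aeval_X]
      rcases i with ⟨n, hn⟩ | ⟨n, hn⟩
      · by_cases h2 : n = 2
        · subst h2
          rw [v_a2, map_pow, psi_tD]
          show _ = A
          linear_combination (-(A' ^ 2)) * hrel1 + (A * (A * A' + 1)) * hAA'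
        · rw [v_a hn h2 (by omega), ψ_alg]
          show ψ₀ (X _) = _
          simp only [ψ₀, aeval_X, u, arcA]
      · by_cases h3 : n = 3
        · subst h3
          rw [v_b3, map_pow, psi_tD]
          show _ = B
          linear_combination (-(B * A' ^ 3)) * hrel1 +
            (B * ((A * A') ^ 2 + A * A' + 1)) * hAA'
        · by_cases h4 : n = 4
          · subst h4
            rw [v_b4, map_mul, map_mul, psi_tD, AlgHom.commutes, ψ_alg]
            show algebraMap ℂ Q (3/2) * (B * A') * ψ₀ (X _) = B4
            have hψ3 : ψ₀ (X (Sum.inr (Sum.inl (⟨3, le_refl 3⟩ : {i : ℕ // 3 ≤ i})))) = A3 := by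
              simp only [ψ₀, aeval_X, u]
            rw [hψ3]
            -- cancel the unit 2 * B
            have h2Q : (2 : Q) = algebraMap ℂ Q 2 := (map_ofNat _ 2).symm
            have h2B : IsUnit ((2 : Q) * B) := by
              refine IsUnit.mul ?_ (hbu.map π)
              refine IsUnit.of_mul_eq_one (a := (2 : Q)) (algebraMap ℂ Q (1/2)) ?_
              rw [h2Q, ← map_mul, show (2 * (1/2) : ℂ) = 1 by norm_num, map_one]
            refine h2B.mul_left_cancel ?_
            have hc : algebraMap ℂ Q (3/2) * 2 = 3 := by
              rw [h2Q, ← map_mul, show (3/2 * 2 : ℂ) = 3 by norm_num, map_ofNat]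
            linear_combination (B ^ 2 * A' * A3) * hc + (3 * A' * A3) * hrel1.symm +
              (3 * A ^ 2 * A3) * hAA' + hrel2
          · rw [v_b hn h3 h4 (by omega), ψ_alg]
            show ψ₀ (X _) = _
            simp only [ψ₀, aeval_X, u, arcB]
  exact AlgHom.ext fun x => DFunLike.congr_fun h x

lemma left_inv : ψ.comp φQ = AlgHom.id ℂ Q := by
  apply Ideal.Quotient.algHom_ext
  rw [show Ideal.Quotient.mkₐ ℂ I = π from rfl, key]
  rfl

lemma φQ_inj : Function.Injective φQ := by
  intro x y hxy
  have := congrArg ψ hxy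
  rw [← AlgHom.comp_apply, ← AlgHom.comp_apply, left_inv] at this
  simpa using this

instance : IsDomain D :=
  IsLocalization.isDomain_of_le_nonZeroDivisors (M := Submonoid.powers tP) _
    (powers_le_nonZeroDivisors_of_noZeroDivisors (MvPolynomial.X_ne_zero _))

lemma domainQ : IsDomain Q := Function.Injective.isDomain φQ.toRingHom φQ_inj

end

end ArcCusp

/-- The ideal `(a₂³ − b₃², 3a₂²a₃ − 2b₃b₄)` is prime in the localization of
`ℂ[a₂, a₃, …, b₃, b₄, …]` at (the multiplicative set generated by) `a₂` and `b₃`;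
equivalently, `ℂ[a₂^{±1}, a₃, …, b₃^{±1}, b₄, …]/(a₂³ − b₃², 3a₂²a₃ − 2b₃b₄)`
is an integral domain. -/
theorem ideal_arc_cuspidal_isPrime :
    (Ideal.span
      { algebraMap (MvPolynomial ArcVar ℂ)
          (Localization.Away (arcA ⟨2, le_refl 2⟩ * arcB ⟨3, le_refl 3⟩))
          ((arcA ⟨2, le_refl 2⟩) ^ 3 - (arcB ⟨3, le_refl 3⟩) ^ 2),
        algebraMap (MvPolynomial ArcVar ℂ)
          (Localization.Away (arcA ⟨2, le_refl 2⟩ * arcB ⟨3, le_refl 3⟩))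
          (3 * (arcA ⟨2, le_refl 2⟩) ^ 2 * arcA ⟨3, by omega⟩
            - 2 * arcB ⟨3, le_refl 3⟩ * arcB ⟨4, by omega⟩) }).IsPrime := by
  rw [← Ideal.Quotient.isDomain_iff_prime]
  exact ArcCusp.domainQ
end

section
/- Let v₀ be the (2,3)-monomial valuation on ℂ[x,y] and v any valuation on ℂ(x,y) with v(x) = 2, v(y) = 3 and v(g) ≥ v₀(g) for all nonzero g ∈ ℂ[x,y] (automatic for any valuation with these values on x,y). If g is v₀-homogeneous and v(g) > v₀(g), then (x³ − y²) divides g, assuming additionally that v comes from an arc α with α*(x) = a₂t² + ⋯, α*(y) = b₃t³ + ⋯ where a₂, b₃ ≠ 0 and a₂³ = b₃². Precisely: if g ∈ ℂ[x,y] is (2,3)-homogeneous of weighted degree d, and the element g(a₂, b₃) given by substituting a₂ for x and b₃ for y in the dehomogenized form (i.e., the coefficient of t^d in α*(g)) vanishes, then x³ − y² divides g. -/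
open MvPolynomial

private lemma weight23_eq (m : Fin 2 →₀ ℕ) :
    (Finsupp.weight ![2,3] m : ℕ) = m 0 * 2 + m 1 * 3 := by
  rw [Finsupp.weight_apply, Finsupp.sum_fintype]
  · simp [Fin.sum_univ_two]
  · intro i; simp

private lemma monomial_eq_prod (m : Fin 2 →₀ ℕ) :
    monomial m (1:ℂ) = X 0 ^ m 0 * X 1 ^ m 1 := by
  have h : Finsupp.single (0 : Fin 2) (m 0) + Finsupp.single 1 (m 1) = m := by
    ext i; fin_cases i <;> simp
  rw [X_pow_eq_monomial, X_pow_eq_monomial, monomial_mul, one_mul, h]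

private lemma mono_diff_dvd_aux (m m' : Fin 2 →₀ ℕ)
    (h : m 0 * 2 + m 1 * 3 = m' 0 * 2 + m' 1 * 3) (hle : m' 1 ≤ m 1) :
    (X 0 ^ 3 - X 1 ^ 2 : MvPolynomial (Fin 2) ℂ) ∣
      (X 0 ^ (m 0) * X 1 ^ (m 1) - X 0 ^ (m' 0) * X 1 ^ (m' 1)) := by
  have h2 : 2 ∣ (m 1 - m' 1) := by omega
  obtain ⟨k, hk⟩ := h2
  have hk1 : m 1 = m' 1 + 2 * k := by omega
  have hk0 : m' 0 = m 0 + 3 * k := by omega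
  have key : (X 0 : MvPolynomial (Fin 2) ℂ) ^ (m 0) * X 1 ^ (m 1) - X 0 ^ (m' 0) * X 1 ^ (m' 1)
      = X 0 ^ (m 0) * X 1 ^ (m' 1) * ((X 1 ^ 2) ^ k - (X 0 ^ 3) ^ k) := by
    rw [hk1, hk0]; ring
  rw [key]
  exact Dvd.dvd.mul_left (by simpa [neg_sub] using
    (sub_dvd_pow_sub_pow (X 1 ^ 2) (X 0 ^ 3 : MvPolynomial (Fin 2) ℂ) k).neg_left) _

private lemma mono_diff_dvd (m m' : Fin 2 →₀ ℕ)
    (h : m 0 * 2 + m 1 * 3 = m' 0 * 2 + m' 1 * 3) :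
    (X 0 ^ 3 - X 1 ^ 2 : MvPolynomial (Fin 2) ℂ) ∣
      (monomial m 1 - monomial m' 1) := by
  rw [monomial_eq_prod, monomial_eq_prod]
  rcases le_total (m' 1) (m 1) with hle | hle
  · exact mono_diff_dvd_aux m m' h hle
  · exact dvd_sub_comm.mp (mono_diff_dvd_aux m' m h.symm hle)

/-- Lemma 4.3: let `a₂, b₃ ∈ K` be nonzero with `a₂³ = b₃²` (a generic point of
the cuspidal curve).  If `g ∈ ℂ[x,y]` is `(2,3)`-weighted homogeneous of degree
`d` and `g(a₂, b₃) = 0` (the coefficient of `t^d` in `α*(g)`), then `x³ − y²`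
divides `g`. -/
theorem curve_dvd_of_vanishes_at_generic_point
    {K : Type*} [Field K] [Algebra ℂ K]
    (a b : K) (ha : a ≠ 0) (hb : b ≠ 0) (hab : a ^ 3 = b ^ 2)
    (g : MvPolynomial (Fin 2) ℂ) (d : ℕ)
    (hhom : IsWeightedHomogeneous ![2, 3] g d)
    (hvan : aeval ![a, b] g = 0) :
    (X 0 ^ 3 - X 1 ^ 2 : MvPolynomial (Fin 2) ℂ) ∣ g := by
  set s : K := b / a with hs
  have hs2 : s ^ 2 = a := by
    rw [hs, div_pow, div_eq_iff (pow_ne_zero 2 ha)]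
    linear_combination -hab
  have hs3 : s ^ 3 = b := by
    rw [hs, div_pow, div_eq_iff (pow_ne_zero 3 ha)]
    linear_combination -b * hab
  have hsne : s ≠ 0 := div_ne_zero hb ha
  -- the sum of coefficients vanishes
  have hcoeffsum : ∑ m ∈ g.support, coeff m g = 0 := by
    have key : aeval ![a, b] g = algebraMap ℂ K (∑ m ∈ g.support, coeff m g) * s ^ d := by
      rw [aeval_def, eval₂_eq', map_sum, Finset.sum_mul]
      apply Finset.sum_congr rfl
      intro m hm
      have hw : m 0 * 2 + m 1 * 3 = d := by
        rw [← weight23_eq]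
        exact_mod_cast hhom (mem_support_iff.mp hm)
      rw [Fin.prod_univ_two]
      simp only [Matrix.cons_val_zero, Matrix.cons_val_one, Matrix.head_cons]
      rw [← hs2, ← hs3, ← pow_mul, ← pow_mul, ← pow_add]
      have hd : 2 * m 0 + 3 * m 1 = d := by omega
      rw [hd]
    rw [key] at hvan
    have h0 : algebraMap ℂ K (∑ m ∈ g.support, coeff m g) = 0 := by
      rcases mul_eq_zero.mp hvan with h | h
      · exact h
      · exact absurd h (pow_ne_zero _ hsne)
    exact (map_eq_zero_iff _ (algebraMap ℂ K).injective).mp h0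
  by_cases hg : g = 0
  · simp [hg]
  obtain ⟨m₀, hm₀⟩ := support_nonempty.mpr hg
  have hw₀ : m₀ 0 * 2 + m₀ 1 * 3 = d := by
    rw [← weight23_eq]
    exact_mod_cast hhom (mem_support_iff.mp hm₀)
  have hrepr : g = ∑ m ∈ g.support, coeff m g • ((monomial m (1:ℂ)) - monomial m₀ 1) := by
    simp only [smul_sub]
    rw [Finset.sum_sub_distrib, ← Finset.sum_smul, hcoeffsum, zero_smul, sub_zero]
    conv_lhs => rw [g.as_sum]
    apply Finset.sum_congr rfl
    intro m _
    rw [smul_monomial, smul_eq_mul, mul_one]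
  rw [hrepr]
  apply Finset.dvd_sum
  intro m hm
  rw [smul_eq_C_mul]
  apply Dvd.dvd.mul_left
  apply mono_diff_dvd
  rw [← weight23_eq, hw₀]
  exact_mod_cast hhom (mem_support_iff.mp hm)
end
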